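/- Let G be a finitely generated group acting minimally and equicontinuously by homeomorphisms on a compact metric Cantor space X. Then for every clopen subset U ⊆ X, the orbit { g·U : g ∈ G } of U under the induced action on clopen sets is finite. -/

import Mathlib

open Pointwise

/-- For a minimal equicontinuous action of a finitely generated
group `G` on a compact metric Cantor space `X`, the orbit of every clopen set
under the induced action on clopen sets is finite. -/
theorem equicontinuous_clopen_orbit_finite
    {G X : Type*} [Group G] [Group.FG G]
    [MetricSpace X] [CompactSpace X]
    [TotallyDisconnectedSpace X] [PerfectSpace X] [Nonempty X]
    [MulAction G X] [ContinuousConstSMul G X]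
    (hmin : ∀ x : X, Dense (MulAction.orbit G x))
    (hequi : ∀ ε > (0 : ℝ), ∃ δ > (0 : ℝ), ∀ x y : X, dist x y < δ →
      ∀ g : G, dist (g • x) (g • y) < ε) :
    ∀ U : Set X, IsClopen U → {V : Set X | ∃ g : G, V = g • U}.Finite := by
  intro U hU
  -- separate U from its complement
  obtain ⟨r, hr0, hr⟩ := EMetric.exists_pos_forall_lt_edist hU.isClosed.isCompact
    hU.isOpen.isClosed_compl disjoint_compl_right
  -- δ-close points agree on membership in U after applying any group element
  obtain ⟨δ, hδ0, hδ⟩ := hequi r (by exact_mod_cast hr0)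
  have key : ∀ x y : X, dist x y < δ → ∀ g : G, x ∈ g • U → y ∈ g • U := by
    intro x y hxy g hx
    rw [Set.mem_smul_set_iff_inv_smul_mem] at hx ⊢
    by_contra hy
    have h1 := hr _ hx _ hy
    have h2 := hδ x y hxy g⁻¹
    rw [edist_dist] at h1
    exact absurd (ENNReal.ofReal_lt_ofReal_iff_of_nonneg (by positivity) |>.mpr h2)
      (not_lt.mpr (le_of_lt (by simpa using h1)))
  -- finite cover by δ-balls
  obtain ⟨t, -, htfin, hcov⟩ := isCompact_univ.finite_cover_balls (X := X) hδ0
  -- every translate is a union of balls centered at points of t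
  have hrep : ∀ g : G, g • U = ⋃ x ∈ {x ∈ t | x ∈ g • U}, Metric.ball x δ := by
    intro g
    ext y
    constructor
    · intro hy
      obtain ⟨x, hxt, hxy⟩ := Set.mem_iUnion₂.mp (hcov (Set.mem_univ y))
      have hx : x ∈ g • U := key y x (Metric.mem_ball.mp hxy) g hy
      exact Set.mem_iUnion₂.mpr ⟨x, ⟨hxt, hx⟩, hxy⟩
    · intro hy
      obtain ⟨x, ⟨hxt, hx⟩, hxy⟩ := Set.mem_iUnion₂.mp hy
      exact key x y (Metric.mem_ball'.mp hxy) g hx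
  -- hence only finitely many translates
  have : {V : Set X | ∃ g : G, V = g • U} ⊆
      (fun s : Set X => ⋃ x ∈ s, Metric.ball x δ) '' {s | s ⊆ t} := by
    rintro V ⟨g, rfl⟩
    exact ⟨{x ∈ t | x ∈ g • U}, fun x hx => hx.1, (hrep g).symm⟩
  exact ((htfin.finite_subsets).image _).subset this
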